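/- For x ≠ 0, (2π)^{−1} ∫_{−2}^{2} (1/2)√(2−|ξ|) e^{ixξ} dξ = (8π)^{−1/2} |x|^{−3/2} ( −cos(2|x|) S(2√|x|/√π) + sin(2|x|) C(2√|x|/√π) ), where S and C are the Fresnel integrals S(z) = ∫_0^z sin(πt²/2)dt, C(z) = ∫_0^z cos(πt²/2)dt. In particular, this inverse Fourier transform of √(f̂) with f̂(ξ) = (1/4)max(2−|ξ|,0) takes both positive and negative values. -/

import Mathlib

open Real MeasureTheory Complex intervalIntegral

set_option maxHeartbeats 1000000

noncomputable def fresnelS (z : ℝ) : ℝ := ∫ t in (0:ℝ)..z, Real.sin (Real.pi * t ^ 2 / 2)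

noncomputable def fresnelC (z : ℝ) : ℝ := ∫ t in (0:ℝ)..z, Real.cos (Real.pi * t ^ 2 / 2)

noncomputable def invFourierSqrtTriangle (x : ℝ) : ℝ :=
  (8 * Real.pi) ^ (-(1:ℝ)/2) * |x| ^ (-(3:ℝ)/2) *
    (-Real.cos (2 * |x|) * fresnelS (2 * Real.sqrt |x| / Real.sqrt Real.pi)
      + Real.sin (2 * |x|) * fresnelC (2 * Real.sqrt |x| / Real.sqrt Real.pi))

/-! ### Auxiliary lemmas -/

lemma contS : Continuous fun t : ℝ => Real.sin (Real.pi * t ^ 2 / 2) := by fun_prop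

lemma contC : Continuous fun t : ℝ => Real.cos (Real.pi * t ^ 2 / 2) := by fun_prop

lemma fresnelS_hasDerivAt (z : ℝ) : HasDerivAt fresnelS (Real.sin (Real.pi * z ^ 2 / 2)) z :=
  intervalIntegral.integral_hasDerivAt_right (contS.intervalIntegrable _ _)
    (contS.aestronglyMeasurable.stronglyMeasurableAtFilter) contS.continuousAt

lemma fresnelC_hasDerivAt (z : ℝ) : HasDerivAt fresnelC (Real.cos (Real.pi * z ^ 2 / 2)) z :=
  intervalIntegral.integral_hasDerivAt_right (contC.intervalIntegrable _ _)
    (contC.aestronglyMeasurable.stronglyMeasurableAtFilter) contC.continuousAt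

@[fun_prop] lemma fresnelS_cont : Continuous fresnelS :=
  intervalIntegral.continuous_primitive (fun a b => contS.intervalIntegrable a b) 0

@[fun_prop] lemma fresnelC_cont : Continuous fresnelC :=
  intervalIntegral.continuous_primitive (fun a b => contC.intervalIntegrable a b) 0

lemma fresnelS_zero : fresnelS 0 = 0 := intervalIntegral.integral_same
lemma fresnelC_zero : fresnelC 0 = 0 := intervalIntegral.integral_same

noncomputable def Gfun (x : ℝ) (u : ℝ) : ℝ :=
  (1/(2*x)) * (Real.cos (2*x) * (u * Real.sin (x*u^2) - Real.sqrt (Real.pi/(2*x)) * fresnelS (Real.sqrt (2*x/Real.pi)*u))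
    + Real.sin (2*x) * (-(u * Real.cos (x*u^2)) + Real.sqrt (Real.pi/(2*x)) * fresnelC (Real.sqrt (2*x/Real.pi)*u)))

lemma Gfun_hasDerivAt (x : ℝ) (hx : 0 < x) (u : ℝ) :
    HasDerivAt (Gfun x) (u^2 * Real.cos (2*x - x*u^2)) u := by
  set c := Real.sqrt (Real.pi/(2*x)) with hc
  set k := Real.sqrt (2*x/Real.pi) with hk
  have hπ := Real.pi_pos
  have hck : c * k = 1 := by
    rw [hc, hk, ← Real.sqrt_mul (by positivity)]
    rw [show Real.pi/(2*x) * (2*x/Real.pi) = 1 by field_simp]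
    exact Real.sqrt_one
  have hk2 : k^2 = 2*x/Real.pi := Real.sq_sqrt (by positivity)
  have h1 : HasDerivAt (fun u : ℝ => x*u^2) (2*x*u) u := by
    simpa [mul_comm, mul_assoc, mul_left_comm] using ((hasDerivAt_pow 2 u).const_mul x)
  have hsin : HasDerivAt (fun u : ℝ => Real.sin (x*u^2)) (Real.cos (x*u^2)*(2*x*u)) u :=
    (Real.hasDerivAt_sin _).comp u h1
  have hcos : HasDerivAt (fun u : ℝ => Real.cos (x*u^2)) (-Real.sin (x*u^2)*(2*x*u)) u :=
    (Real.hasDerivAt_cos _).comp u h1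
  have husin : HasDerivAt (fun u : ℝ => u * Real.sin (x*u^2))
      (Real.sin (x*u^2) + u * (Real.cos (x*u^2)*(2*x*u))) u := by
    simpa [Pi.mul_def] using (hasDerivAt_id' u).mul hsin
  have hucos : HasDerivAt (fun u : ℝ => u * Real.cos (x*u^2))
      (Real.cos (x*u^2) + u * (-Real.sin (x*u^2)*(2*x*u))) u := by
    simpa [Pi.mul_def] using (hasDerivAt_id' u).mul hcos
  have hku : HasDerivAt (fun u : ℝ => k*u) k u := by
    simpa using (hasDerivAt_id u).const_mul k
  have hA : Real.pi * (k*u)^2 / 2 = x*u^2 := by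
    rw [mul_pow, hk2]; field_simp
  have hfS : HasDerivAt (fun u : ℝ => fresnelS (k*u)) (Real.sin (x*u^2) * k) u := by
    have := (fresnelS_hasDerivAt (k*u)).comp u hku
    rwa [hA] at this
  have hfC : HasDerivAt (fun u : ℝ => fresnelC (k*u)) (Real.cos (x*u^2) * k) u := by
    have := (fresnelC_hasDerivAt (k*u)).comp u hku
    rwa [hA] at this
  have hG : HasDerivAt (Gfun x)
      ((1/(2*x)) * (Real.cos (2*x) * ((Real.sin (x*u^2) + u * (Real.cos (x*u^2)*(2*x*u))) - c * (Real.sin (x*u^2) * k))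
        + Real.sin (2*x) * (-(Real.cos (x*u^2) + u * (-Real.sin (x*u^2)*(2*x*u))) + c * (Real.cos (x*u^2) * k)))) u := by
    exact (((husin.sub (hfS.const_mul c)).const_mul (Real.cos (2*x))).add
      ((hucos.neg.add (hfC.const_mul c)).const_mul (Real.sin (2*x)))).const_mul (1/(2*x))
  convert hG using 1
  rw [Real.cos_sub]
  have hx' : (2*x) ≠ 0 := by positivity
  field_simp
  rw [mul_comm (u ^ 2) x]
  linear_combination (Real.cos (2*x)*Real.sin (x*u^2) - Real.sin (2*x)*Real.cos (x*u^2)) * hck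

lemma Gfun_zero (x : ℝ) : Gfun x 0 = 0 := by
  simp [Gfun, fresnelS_zero, fresnelC_zero]

lemma sqrt_integral_eq (x : ℝ) (hx : 0 < x) :
    ∫ ξ in (0:ℝ)..2, Real.sqrt (2-ξ) * Real.cos (x*ξ) = 2 * Gfun x (Real.sqrt 2) := by
  have hcontG : Continuous (Gfun x) := by unfold Gfun; fun_prop
  have hcont : ContinuousOn (fun ξ : ℝ => -2 * Gfun x (Real.sqrt (2-ξ))) (Set.Icc 0 2) := by
    apply Continuous.continuousOn; fun_prop
  have hderiv : ∀ ξ ∈ Set.Ioo (0:ℝ) 2,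
      HasDerivAt (fun ξ => -2 * Gfun x (Real.sqrt (2-ξ))) (Real.sqrt (2-ξ) * Real.cos (x*ξ)) ξ := by
    intro ξ hξ
    have h2ξ : 0 < 2 - ξ := by linarith [hξ.2]
    have hs : HasDerivAt (fun ξ : ℝ => Real.sqrt (2-ξ)) (1/(2*Real.sqrt (2-ξ)) * (-1)) ξ := by
      have := (Real.hasDerivAt_sqrt (ne_of_gt h2ξ)).comp ξ
        ((hasDerivAt_const ξ (2:ℝ)).sub (hasDerivAt_id ξ))
      simpa [Function.comp_def] using this
    have hGd := ((Gfun_hasDerivAt x hx (Real.sqrt (2-ξ))).comp ξ hs).const_mul (-2 : ℝ)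
    refine hGd.congr_deriv ?_
    symm
    have hsq : Real.sqrt (2-ξ) ^ 2 = 2 - ξ := Real.sq_sqrt h2ξ.le
    have hsne : Real.sqrt (2-ξ) ≠ 0 := by positivity
    rw [hsq, show 2*x - x*(2-ξ) = x*ξ by ring]
    field_simp
    linear_combination Real.cos (ξ*x) * hsq
  have hint : IntervalIntegrable (fun ξ : ℝ => Real.sqrt (2-ξ) * Real.cos (x*ξ)) volume 0 2 := by
    apply Continuous.intervalIntegrable; fun_prop
  have := intervalIntegral.integral_eq_sub_of_hasDeriv_right_of_le (by norm_num) hcont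
    (fun ξ hξ => (hderiv ξ hξ).hasDerivWithinAt) hint
  rw [this]
  norm_num [Gfun_zero]

lemma main_pos (x : ℝ) (hx : 0 < x) :
    (2*Real.pi)⁻¹ * ∫ ξ in (0:ℝ)..2, Real.sqrt (2-ξ) * Real.cos (x*ξ) = invFourierSqrtTriangle x := by
  have hπ := Real.pi_pos
  rw [sqrt_integral_eq x hx]
  unfold invFourierSqrtTriangle Gfun
  rw [abs_of_pos hx]
  have h2 : Real.sqrt 2 ^ 2 = 2 := Real.sq_sqrt (by norm_num)
  have hz : Real.sqrt (2*x/Real.pi) * Real.sqrt 2 = 2 * Real.sqrt x / Real.sqrt Real.pi := by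
    rw [← Real.sqrt_mul (by positivity), show 2*x/Real.pi*2 = 2^2*x/Real.pi by ring,
      Real.sqrt_div (by positivity) Real.pi, Real.sqrt_mul (by positivity) x,
      Real.sqrt_sq (by norm_num)]
  have hc : Real.sqrt (Real.pi/(2*x)) = Real.sqrt Real.pi / (Real.sqrt 2 * Real.sqrt x) := by
    rw [Real.sqrt_div hπ.le, Real.sqrt_mul (by norm_num)]
  have h8π : (8*Real.pi : ℝ)^(-(1:ℝ)/2) = (2*Real.sqrt 2*Real.sqrt Real.pi)⁻¹ := by
    rw [show (-(1:ℝ)/2) = -(1/2) by norm_num, Real.rpow_neg (by positivity), ← Real.sqrt_eq_rpow]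
    congr 1
    rw [Real.sqrt_mul (by norm_num), show (8:ℝ) = 2^2*2 by norm_num,
      Real.sqrt_mul (by positivity), Real.sqrt_sq (by norm_num)]
  have hx32 : x^(-(3:ℝ)/2) = (x * Real.sqrt x)⁻¹ := by
    rw [show (-(3:ℝ)/2) = -(3/2) by norm_num, Real.rpow_neg hx.le]
    congr 1
    rw [show ((3:ℝ)/2) = 1 + 1/2 by norm_num, Real.rpow_add hx, Real.rpow_one, ← Real.sqrt_eq_rpow]
  have hp : Real.sqrt Real.pi * Real.sqrt Real.pi = Real.pi := Real.mul_self_sqrt hπ.le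
  have hs : Real.sqrt x * Real.sqrt x = x := Real.mul_self_sqrt hx.le
  have hsp : (0:ℝ) < Real.sqrt Real.pi := Real.sqrt_pos.mpr hπ
  have hss : (0:ℝ) < Real.sqrt x := Real.sqrt_pos.mpr hx
  have h2s : (0:ℝ) < Real.sqrt 2 := Real.sqrt_pos.mpr (by norm_num)
  have h22 : Real.sqrt 2 * Real.sqrt 2 = 2 := Real.mul_self_sqrt (by norm_num)
  have hcoef : (2*Real.pi)⁻¹ * (2 * (1/(2*x)) * Real.sqrt (Real.pi/(2*x)))
      = (8*Real.pi:ℝ)^(-(1:ℝ)/2) * x^(-(3:ℝ)/2) := by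
    rw [h8π, hx32, hc]
    field_simp
    linear_combination hp
  rw [h2, hz, h8π, hx32, hc, mul_comm x 2]
  rw [h8π, hx32, hc] at hcoef
  set A := fresnelS (2 * Real.sqrt x / Real.sqrt Real.pi)
  set B := fresnelC (2 * Real.sqrt x / Real.sqrt Real.pi)
  linear_combination (-Real.cos (2*x)*A + Real.sin (2*x)*B) * hcoef

lemma complex_reduce (x : ℝ) :
    (∫ ξ in (-2:ℝ)..2, (((1/2) * Real.sqrt (2 - |ξ|) : ℝ) : ℂ) * Complex.exp (Complex.I * x * ξ))
      = ((∫ ξ in (0:ℝ)..2, Real.sqrt (2-ξ) * Real.cos (x*ξ) : ℝ) : ℂ) := by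
  have hrw : ∀ ξ : ℝ, (((1/2) * Real.sqrt (2 - |ξ|) : ℝ) : ℂ) * Complex.exp (Complex.I * x * ξ)
      = (((1/2) * Real.sqrt (2 - |ξ|) * Real.cos (x*ξ) : ℝ) : ℂ)
        + (((1/2) * Real.sqrt (2 - |ξ|) * Real.sin (x*ξ) : ℝ) : ℂ) * Complex.I := by
    intro ξ
    rw [show Complex.I * x * ξ = ((x*ξ : ℝ) : ℂ) * Complex.I by push_cast; ring,
      Complex.exp_mul_I, ← Complex.ofReal_cos, ← Complex.ofReal_sin]
    push_cast
    ring
  rw [intervalIntegral.integral_congr (fun ξ _ => hrw ξ)]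
  have hcos : Continuous fun ξ : ℝ => (1/2) * Real.sqrt (2-|ξ|) * Real.cos (x*ξ) := by fun_prop
  have hsin : Continuous fun ξ : ℝ => (1/2) * Real.sqrt (2-|ξ|) * Real.sin (x*ξ) := by fun_prop
  have i1 : IntervalIntegrable (fun ξ : ℝ => (((1/2) * Real.sqrt (2-|ξ|) * Real.cos (x*ξ) : ℝ) : ℂ)) volume (-2) 2 := by
    apply Continuous.intervalIntegrable; fun_prop
  have i2 : IntervalIntegrable (fun ξ : ℝ => (((1/2) * Real.sqrt (2-|ξ|) * Real.sin (x*ξ) : ℝ) : ℂ) * Complex.I) volume (-2) 2 := by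
    apply Continuous.intervalIntegrable; fun_prop
  rw [intervalIntegral.integral_add i1 i2,
    intervalIntegral.integral_mul_const, intervalIntegral.integral_ofReal,
    intervalIntegral.integral_ofReal]
  have hodd : (∫ ξ in (-2:ℝ)..2, (1/2) * Real.sqrt (2-|ξ|) * Real.sin (x*ξ)) = 0 := by
    have h := intervalIntegral.integral_comp_neg (a := (-2:ℝ)) (b := 2)
      (fun ξ => (1/2) * Real.sqrt (2-|ξ|) * Real.sin (x*ξ))
    simp only [neg_neg] at h
    have h2 : (∫ ξ in (-2:ℝ)..2, (1/2) * Real.sqrt (2-|(-ξ)|) * Real.sin (x*(-ξ)))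
        = ∫ ξ in (-2:ℝ)..2, -((1/2) * Real.sqrt (2-|ξ|) * Real.sin (x*ξ)) := by
      apply intervalIntegral.integral_congr
      intro ξ _
      simp only [abs_neg, mul_neg, Real.sin_neg]
    rw [h2, intervalIntegral.integral_neg] at h
    linarith
  have heven : (∫ ξ in (-2:ℝ)..2, (1/2) * Real.sqrt (2-|ξ|) * Real.cos (x*ξ))
      = ∫ ξ in (0:ℝ)..2, Real.sqrt (2-ξ) * Real.cos (x*ξ) := by
    have j1 : IntervalIntegrable (fun ξ : ℝ => (1/2) * Real.sqrt (2-|ξ|) * Real.cos (x*ξ)) volume (-2) 0 :=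
      hcos.intervalIntegrable _ _
    have j2 : IntervalIntegrable (fun ξ : ℝ => (1/2) * Real.sqrt (2-|ξ|) * Real.cos (x*ξ)) volume 0 2 :=
      hcos.intervalIntegrable _ _
    have hsplit := (intervalIntegral.integral_add_adjacent_intervals j1 j2).symm
    have hneg : (∫ ξ in (-2:ℝ)..0, (1/2) * Real.sqrt (2-|ξ|) * Real.cos (x*ξ))
        = ∫ ξ in (0:ℝ)..2, (1/2) * Real.sqrt (2-|ξ|) * Real.cos (x*ξ) := by
      have h := intervalIntegral.integral_comp_neg (a := (0:ℝ)) (b := 2)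
        (fun ξ => (1/2) * Real.sqrt (2-|ξ|) * Real.cos (x*ξ))
      simp only [neg_zero] at h
      rw [← h]
      apply intervalIntegral.integral_congr
      intro ξ _
      simp only [abs_neg, mul_neg, Real.cos_neg]
    have hhalf : (∫ ξ in (0:ℝ)..2, (1/2) * Real.sqrt (2-|ξ|) * Real.cos (x*ξ))
        = (1/2) * ∫ ξ in (0:ℝ)..2, Real.sqrt (2-ξ) * Real.cos (x*ξ) := by
      rw [← intervalIntegral.integral_const_mul]
      apply intervalIntegral.integral_congr
      intro ξ hξ
      rw [Set.uIcc_of_le (by norm_num)] at hξ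
      show (1/2) * Real.sqrt (2-|ξ|) * Real.cos (x*ξ) = (1/2) * (Real.sqrt (2-ξ) * Real.cos (x*ξ))
      rw [_root_.abs_of_nonneg hξ.1]
      ring
    rw [hsplit, hneg, hhalf]
    ring
  rw [hodd, heven]
  simp

lemma fresnelS_sqrt2_pos : 0 < fresnelS (Real.sqrt 2) := by
  have h2 : Real.sqrt 2 ^ 2 = 2 := Real.sq_sqrt (by norm_num)
  have h2p : (0:ℝ) < Real.sqrt 2 := Real.sqrt_pos.mpr (by norm_num)
  apply intervalIntegral.intervalIntegral_pos_of_pos_on (contS.intervalIntegrable _ _)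
  · intro t ht
    apply Real.sin_pos_of_pos_of_lt_pi
    · have := ht.1; positivity
    · have ht2 : t^2 < 2 := by nlinarith [ht.2, ht.1]
      nlinarith [Real.pi_pos]
  · exact h2p

lemma fresnelS_two_pos : 0 < fresnelS 2 := by
  have hπ := Real.pi_pos
  have hπl : (3.1415:ℝ) < Real.pi := by linarith [Real.pi_gt_d6]
  have hπu : Real.pi < 3.1416 := by linarith [Real.pi_lt_d2, Real.pi_lt_d6]
  set s2 := Real.sqrt 2 with hs2def
  set b := Real.sqrt (5/2) with hbdef
  have h2 : s2 ^ 2 = 2 := Real.sq_sqrt (by norm_num)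
  have hb2 : b ^ 2 = 5/2 := Real.sq_sqrt (by norm_num)
  have hs2l : (1.4142:ℝ) < s2 := by
    rw [hs2def]; rw [Real.lt_sqrt (by norm_num)]; norm_num
  have hs2u : s2 < 1.41422 := by
    rw [hs2def]; rw [Real.sqrt_lt' (by norm_num)]; norm_num
  have hbl : (1.5811:ℝ) < b := by
    rw [hbdef]; rw [Real.lt_sqrt (by norm_num)]; norm_num
  have hbu : b < 1.58114 := by
    rw [hbdef]; rw [Real.sqrt_lt' (by norm_num)]; norm_num
  have h1s : (1:ℝ) ≤ s2 := by linarith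
  have hsb : s2 ≤ b := by linarith
  have hb2' : b ≤ 2 := by linarith
  have ii : ∀ a b : ℝ, IntervalIntegrable (fun t => Real.sin (Real.pi * t ^ 2 / 2)) volume a b :=
    fun a b => contS.intervalIntegrable a b
  -- split
  have a1 := intervalIntegral.integral_add_adjacent_intervals (ii 0 1) (ii 1 s2)
  have a2 := intervalIntegral.integral_add_adjacent_intervals (ii 0 s2) (ii s2 b)
  have a3 := intervalIntegral.integral_add_adjacent_intervals (ii 0 b) (ii b 2)
  -- piece 1
  have B1 : (∫ t in (0:ℝ)..1, t^2) ≤ ∫ t in (0:ℝ)..1, Real.sin (Real.pi * t ^ 2 / 2) := by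
    apply intervalIntegral.integral_mono_on (by norm_num)
      ((continuous_pow 2).intervalIntegrable _ _) (ii 0 1)
    intro t ht
    have ht2 : t^2 ≤ 1 := by nlinarith [ht.1, ht.2]
    have key := Real.mul_le_sin (x := Real.pi*t^2/2) (by positivity)
      (by nlinarith [ht2, hπ])
    have heq : 2/Real.pi*(Real.pi*t^2/2) = t^2 := by field_simp
    linarith [key, heq.ge]
  have V1 : (∫ t in (0:ℝ)..1, t^2) = 1/3 := by
    rw [integral_pow]; norm_num
  -- piece 2
  have B2 : (∫ t in (1:ℝ)..s2, (2 - t^2)) ≤ ∫ t in (1:ℝ)..s2, Real.sin (Real.pi * t ^ 2 / 2) := by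
    apply intervalIntegral.integral_mono_on h1s
      ((continuous_const.sub (continuous_pow 2)).intervalIntegrable _ _) (ii 1 s2)
    intro t ht
    have ht2 : t^2 ≤ 2 := by nlinarith [ht.2, ht.1, h2]
    have ht1 : 1 ≤ t^2 := by nlinarith [ht.1]
    have hrw : Real.sin (Real.pi * t ^ 2 / 2) = Real.sin (Real.pi - Real.pi * t^2/2) := by
      rw [Real.sin_pi_sub]
    have key := Real.mul_le_sin (x := Real.pi - Real.pi*t^2/2) (by nlinarith) (by nlinarith)
    have heq : 2/Real.pi*(Real.pi - Real.pi*t^2/2) = 2 - t^2 := by field_simp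
    show 2 - t^2 ≤ Real.sin (Real.pi * t ^ 2 / 2)
    rw [hrw]
    linarith [key, heq.ge]
  have V2 : (∫ t in (1:ℝ)..s2, (2 - t^2)) = 2*(s2 - 1) - (2*s2 - 1)/3 := by
    rw [intervalIntegral.integral_sub intervalIntegrable_const
      ((continuous_pow 2).intervalIntegrable _ _), integral_pow, intervalIntegral.integral_const]
    have : s2^3 = 2*s2 := by nlinarith [h2]
    rw [this]
    simp only [smul_eq_mul]
    push_cast
    ring
  -- piece 3
  have B3 : (∫ t in s2..b, (Real.pi - Real.pi/2 * t^2)) ≤ ∫ t in s2..b, Real.sin (Real.pi * t ^ 2 / 2) := by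
    apply intervalIntegral.integral_mono_on hsb
      ((continuous_const.sub (continuous_const.mul (continuous_pow 2))).intervalIntegrable _ _) (ii s2 b)
    intro t ht
    have ht2 : 2 ≤ t^2 := by nlinarith [ht.1, h2]
    have hrw : Real.sin (Real.pi * t ^ 2 / 2) = -Real.sin (Real.pi * t^2/2 - Real.pi) := by
      have := Real.sin_add_pi (Real.pi * t^2/2 - Real.pi)
      rw [sub_add_cancel] at this
      exact this
    have key := Real.sin_le (x := Real.pi*t^2/2 - Real.pi) (by nlinarith)
    show Real.pi - Real.pi/2 * t^2 ≤ Real.sin (Real.pi * t ^ 2 / 2)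
    rw [hrw]
    linarith
  have V3 : (∫ t in s2..b, (Real.pi - Real.pi/2 * t^2))
      = Real.pi*(b - s2) - Real.pi/2 * ((5/2)*b - 2*s2)/3 := by
    rw [intervalIntegral.integral_sub intervalIntegrable_const
      (Continuous.intervalIntegrable (by fun_prop : Continuous fun t : ℝ => Real.pi/2 * t^2) _ _),
      intervalIntegral.integral_const_mul, integral_pow, intervalIntegral.integral_const]
    have e1 : s2^3 = 2*s2 := by nlinarith [h2]
    have e2 : b^3 = (5/2)*b := by nlinarith [hb2]
    rw [e1, e2]
    simp only [smul_eq_mul]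
    push_cast
    ring
  -- piece 4
  have B4 : (∫ t in b..2, (-1 : ℝ)) ≤ ∫ t in b..2, Real.sin (Real.pi * t ^ 2 / 2) := by
    apply intervalIntegral.integral_mono_on hb2' intervalIntegrable_const (ii b 2)
    intro t _
    exact Real.neg_one_le_sin _
  have V4 : (∫ t in b..2, (-1 : ℝ)) = -(2 - b) := by
    rw [intervalIntegral.integral_const]
    simp only [smul_eq_mul]
    ring
  have : fresnelS 2 = (∫ t in (0:ℝ)..1, Real.sin (Real.pi * t ^ 2 / 2))
      + (∫ t in (1:ℝ)..s2, Real.sin (Real.pi * t ^ 2 / 2))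
      + (∫ t in s2..b, Real.sin (Real.pi * t ^ 2 / 2))
      + (∫ t in b..2, Real.sin (Real.pi * t ^ 2 / 2)) := by
    unfold fresnelS
    linarith [a1, a2, a3]
  rw [this]
  rw [V1] at B1; rw [V2] at B2; rw [V3] at B3; rw [V4] at B4
  nlinarith [B1, B2, B3, B4, hs2l, hs2u, hbl, hbu, hπl, hπu,
    mul_lt_mul_of_pos_left hbl hπ, mul_lt_mul_of_pos_left hs2u hπ]

lemma invF_even (x : ℝ) : invFourierSqrtTriangle (-x) = invFourierSqrtTriangle x := by
  simp [invFourierSqrtTriangle, abs_neg]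

lemma invF_pi_half_pos : 0 < invFourierSqrtTriangle (Real.pi/2) := by
  have hπ := Real.pi_pos
  unfold invFourierSqrtTriangle
  rw [abs_of_pos (by positivity : (0:ℝ) < Real.pi/2)]
  rw [show 2 * (Real.pi/2) = Real.pi by ring, Real.cos_pi, Real.sin_pi]
  have hz : 2 * Real.sqrt (Real.pi/2) / Real.sqrt Real.pi = Real.sqrt 2 := by
    rw [Real.sqrt_div hπ.le]
    have hsp : (0:ℝ) < Real.sqrt Real.pi := Real.sqrt_pos.mpr hπ
    have h2s : (0:ℝ) < Real.sqrt 2 := Real.sqrt_pos.mpr (by norm_num)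
    have h22 : Real.sqrt 2 * Real.sqrt 2 = 2 := Real.mul_self_sqrt (by norm_num)
    field_simp
    linear_combination (-1:ℝ) * h22
  rw [hz]
  have h1 : (0:ℝ) < (8*Real.pi : ℝ)^(-(1:ℝ)/2) := Real.rpow_pos_of_pos (by positivity) _
  have h2 : (0:ℝ) < (Real.pi/2 : ℝ)^(-(3:ℝ)/2) := Real.rpow_pos_of_pos (by positivity) _
  have h3 := fresnelS_sqrt2_pos
  have h4 : (0:ℝ) < (8*Real.pi : ℝ)^(-(1:ℝ)/2) * (Real.pi/2 : ℝ)^(-(3:ℝ)/2) := mul_pos h1 h2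
  nlinarith [mul_pos h4 h3]

lemma invF_pi_neg : invFourierSqrtTriangle Real.pi < 0 := by
  have hπ := Real.pi_pos
  unfold invFourierSqrtTriangle
  rw [abs_of_pos hπ]
  rw [Real.cos_two_pi, Real.sin_two_pi]
  have hsp : (0:ℝ) < Real.sqrt Real.pi := Real.sqrt_pos.mpr hπ
  have hz : 2 * Real.sqrt Real.pi / Real.sqrt Real.pi = 2 := by
    field_simp
  rw [hz]
  have h1 : (0:ℝ) < (8*Real.pi : ℝ)^(-(1:ℝ)/2) := Real.rpow_pos_of_pos (by positivity) _
  have h2 : (0:ℝ) < (Real.pi : ℝ)^(-(3:ℝ)/2) := Real.rpow_pos_of_pos hπ _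
  have h3 := fresnelS_two_pos
  have h4 : (0:ℝ) < (8*Real.pi : ℝ)^(-(1:ℝ)/2) * (Real.pi : ℝ)^(-(3:ℝ)/2) := mul_pos h1 h2
  nlinarith [mul_pos h4 h3]

theorem sqrt_triangle_inverse_fourier :
    (∀ x : ℝ, x ≠ 0 →
        (2 * Real.pi : ℂ)⁻¹ *
            ∫ ξ in (-2:ℝ)..2,
              (((1/2) * Real.sqrt (2 - |ξ|) : ℝ) : ℂ) * Complex.exp (Complex.I * x * ξ)
          = (invFourierSqrtTriangle x : ℂ))
    ∧ (∃ x₁ x₂ : ℝ, 0 < invFourierSqrtTriangle x₁ ∧ invFourierSqrtTriangle x₂ < 0) := by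
  constructor
  · intro x hx
    rw [complex_reduce x]
    rw [show ((2 * Real.pi : ℂ))⁻¹ = (((2*Real.pi)⁻¹ : ℝ) : ℂ) by push_cast; ring]
    rw [← Complex.ofReal_mul]
    rw [Complex.ofReal_inj]
    rcases lt_or_gt_of_ne hx with h | h
    · have hcong : (∫ ξ in (0:ℝ)..2, Real.sqrt (2-ξ) * Real.cos (x*ξ))
          = ∫ ξ in (0:ℝ)..2, Real.sqrt (2-ξ) * Real.cos ((-x)*ξ) := by
        apply intervalIntegral.integral_congr
        intro ξ _
        simp only [neg_mul, Real.cos_neg]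
      rw [hcong, main_pos (-x) (by linarith), invF_even]
    · exact main_pos x h
  · exact ⟨Real.pi/2, Real.pi, invF_pi_half_pos, invF_pi_neg⟩
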